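/- arXiv:1406.2955 — 3 statements merged into one kernel-verified Lean document; each statement's English description precedes it below -/
import Mathlib

section
/- For every 0 ≤ n ≤ m−1 and every t ∈ {1,2,3}, writing i = i_{n+1}, j = j_{n+1}, k = k_{n+1}, a = a_{n+1}, d_{rt} = d_{rt}(n), and d'_{rt} = d_{rt}(n+1), one has s_{n+1,t} = (1 + 2a)·d_{it} + (2a − 1)·d_{jt} + d_{kt} + a·δ_{it} + (a − 1)·δ_{jt}. -/
/-- The transposition (1 3) on strings {1,2,3}, encoded as `Fin 3 = {0,1,2}`
(string `r` corresponds to `r - 1 : Fin 3`). -/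
def trans13 : Equiv.Perm (Fin 3) := Equiv.swap 0 2

/-- The 3-cycle (1 3 2) sending 1 ↦ 3, 3 ↦ 2, 2 ↦ 1, encoded on `Fin 3`:
0 ↦ 2, 2 ↦ 1, 1 ↦ 0. -/
def cyc132 : Equiv.Perm (Fin 3) := Equiv.swap 0 1 * Equiv.swap 0 2

/-- The matrix `M(a, i, j)`: the only (possibly) nonzero entries are ⌊a/2⌋ at (i,i),
⌈(a-1)/2⌉ at (i,j), ⌈a/2⌉ at (j,i) and ⌊(a-1)/2⌋ at (j,j). -/
def Mmat (a : ℕ) (i j : Fin 3) : Matrix (Fin 3) (Fin 3) ℤ :=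
  Matrix.of fun r t =>
    if r = i ∧ t = i then ⌊(a : ℚ) / 2⌋
    else if r = i ∧ t = j then ⌈((a : ℚ) - 1) / 2⌉
    else if r = j ∧ t = i then ⌈(a : ℚ) / 2⌉
    else if r = j ∧ t = j then ⌊((a : ℚ) - 1) / 2⌋
    else 0

/-- Kronecker delta δ_{rt}. -/
def kd (r t : Fin 3) : ℕ := if r = t then 1 else 0

/-- `mu c = 1` if `c` is odd, `0` if `c` is even. -/
def mu (c : ℕ) : ℕ := if Odd c then 1 else 0

lemma fc_half (c : ℤ) : ⌊(c:ℚ)/2⌋ + ⌈(c:ℚ)/2⌉ = c := by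
  rcases Int.even_or_odd c with ⟨d, rfl⟩ | ⟨d, rfl⟩
  · have h : ((d+d:ℤ):ℚ)/2 = (d:ℚ) := by push_cast; ring
    rw [h]; simp
  · have h : ((2*d+1:ℤ):ℚ)/2 = (1:ℚ)/2 + (d:ℤ) := by push_cast; ring
    have hf : ⌊(1:ℚ)/2⌋ = 0 := by norm_num [Int.floor_eq_iff]
    have hc : ⌈(1:ℚ)/2⌉ = 1 := by rw [Int.ceil_eq_iff] <;> norm_num
    rw [h, Int.floor_add_intCast, Int.ceil_add_intCast, hf, hc]; ring

lemma perm_sum3 (π : Equiv.Perm (Fin 3)) (f : Fin 3 → ℤ) :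
    f (π 0) + f (π 1) + f (π 2) = f 0 + f 1 + f 2 := by
  have := Equiv.sum_comp π f
  simpa [Fin.sum_univ_three, add_assoc] using this

theorem sum_formula
    (m : ℕ) (hm : 1 ≤ m) (a : ℕ → ℕ)
    (ha : ∀ n, 1 ≤ n → n ≤ m → 0 < a n)
    (σ : ℕ → Equiv.Perm (Fin 3))
    (hσ1 : σ 1 = 1)
    (hσ : ∀ n, 1 ≤ n → n ≤ m →
      σ (n + 1) = if Even (a n) then σ n * trans13 else σ n * cyc132)
    (D : ℕ → Matrix (Fin 3) (Fin 3) ℤ)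
    (hD0 : D 0 = 0)
    (hD : ∀ n, n + 1 ≤ m →
      D (n + 1) = 2 * Mmat (a (n + 1)) (σ (n + 1) 0) (σ (n + 1) 1) * D n + D n
        + Mmat (a (n + 1)) (σ (n + 1) 0) (σ (n + 1) 1))
    (s : ℕ → Fin 3 → ℤ)
    (hs : ∀ n t, s n t = D n 0 t + D n 1 t + D n 2 t)
 :
    ∀ n, n + 1 ≤ m → ∀ t : Fin 3,
      s (n + 1) t = (1 + 2 * (a (n + 1) : ℤ)) * D n (σ (n + 1) 0) t
        + (2 * (a (n + 1) : ℤ) - 1) * D n (σ (n + 1) 1) t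
        + D n (σ (n + 1) 2) t
        + (a (n + 1) : ℤ) * (kd (σ (n + 1) 0) t : ℤ)
        + ((a (n + 1) : ℤ) - 1) * (kd (σ (n + 1) 1) t : ℤ) := by
  intro n hn t
  set A := a (n + 1) with hA
  set π := σ (n + 1) with hπ
  set i := π 0 with hi
  set j := π 1 with hj
  set k := π 2 with hk
  have hij : i ≠ j := fun h => by simpa [hi, hj] using π.injective h
  have hik : i ≠ k := fun h => by simpa [hi, hk] using π.injective h
  have hjk : j ≠ k := fun h => by simpa [hj, hk] using π.injective h
  set M := Mmat A i j with hM
  have h1 : ⌊(A:ℚ)/2⌋ + ⌈(A:ℚ)/2⌉ = (A:ℤ) := by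
    have := fc_half (A:ℤ); push_cast at this ⊢; linarith
  have h2 : ⌈((A:ℚ)-1)/2⌉ + ⌊((A:ℚ)-1)/2⌋ = (A:ℤ) - 1 := by
    have := fc_half ((A:ℤ) - 1); push_cast at this ⊢; linarith
  have key : ∀ r, D (n+1) r t = 2 * ((M * D n) r t) + D n r t + M r t := by
    intro r
    rw [hD n hn]
    simp [Matrix.add_apply, hM, two_mul, add_mul, Matrix.add_mul]
    rfl
  have hMD : ∀ r, (M * D n) r t = M r i * D n i t + M r j * D n j t + M r k * D n k t := by
    intro r
    rw [Matrix.mul_apply, Fin.sum_univ_three,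
      ← perm_sum3 π (fun u => M r u * D n u t)]
  have main : s (n+1) t
      = (2 * ((M * D n) i t) + D n i t + M i t)
      + (2 * ((M * D n) j t) + D n j t + M j t)
      + (2 * ((M * D n) k t) + D n k t + M k t) := by
    rw [hs, key 0, key 1, key 2,
      ← perm_sum3 π (fun r => 2 * ((M * D n) r t) + D n r t + M r t)]
  rw [main, hMD i, hMD j, hMD k]
  have Mik : M i k = 0 := by simp [hM, Mmat, hik.symm, hjk.symm]
  have Mjk : M j k = 0 := by simp [hM, Mmat, hik.symm, hjk.symm, hij.symm]
  have Mk : ∀ u, M k u = 0 := by intro u; simp [hM, Mmat, hik.symm, hjk.symm, Ne.symm hik, Ne.symm hjk, hik, hjk]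
  have Mii : M i i = ⌊(A:ℚ)/2⌋ := by simp [hM, Mmat]
  have Mij : M i j = ⌈((A:ℚ)-1)/2⌉ := by simp [hM, Mmat, hij.symm]
  have Mji : M j i = ⌈(A:ℚ)/2⌉ := by simp [hM, Mmat, hij, hij.symm]
  have Mjj : M j j = ⌊((A:ℚ)-1)/2⌋ := by simp [hM, Mmat, hij, hij.symm]
  simp only [Mii, Mij, Mji, Mjj, Mik, Mjk, Mk]
  rcases eq_or_ne t i with rfl | hti
  · simp only [Mii, Mji]
    simp [kd, hij.symm]
    linear_combination (2 * D n i i + 1) * h1 + (2 * D n j i) * h2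
  rcases eq_or_ne t j with rfl | htj
  · simp only [Mij, Mjj]
    simp [kd, hij]
    linear_combination (2 * D n i j) * h1 + (2 * D n j j + 1) * h2
  · have Mit : M i t = 0 := by simp [hM, Mmat, hti, htj]
    have Mjt : M j t = 0 := by simp [hM, Mmat, hti, htj, hij.symm]
    rw [Mit, Mjt]
    simp [kd, Ne.symm hti, Ne.symm htj]
    linear_combination (2 * D n i t) * h1 + (2 * D n j t) * h2
end

section
/- For every 0 ≤ n ≤ m−1 and every t ∈ {1,2,3}, writing i = i_{n+1}, j = j_{n+1}, k = k_{n+1}, a = a_{n+1}, and d'_{rt} = d_{rt}(n+1), one has s_{n,t} = (−1)^{μ_a}·(d'_{it} − d'_{jt}) + d'_{kt} − μ_a·δ_{it} + (μ_a − 1)·δ_{jt}. -/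
lemma Mmat_even (b : ℕ) (i j r t : Fin 3) :
    Mmat (2*b) i j r t = if r = i ∧ t = i then (b:ℤ) else if r = i ∧ t = j then (b:ℤ)
      else if r = j ∧ t = i then (b:ℤ) else if r = j ∧ t = j then (b:ℤ)-1 else 0 := by
  have h1 : ⌊((2*b:ℕ) : ℚ) / 2⌋ = (b:ℤ) := by
    have : ((2*b:ℕ):ℚ)/2 = ((b:ℤ):ℚ) := by push_cast; ring
    rw [this, Int.floor_intCast]
  have h2 : ⌈(((2*b:ℕ):ℚ) - 1) / 2⌉ = (b:ℤ) := by
    rw [Int.ceil_eq_iff] <;> push_cast <;> constructor <;> linarith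
  have h3 : ⌈((2*b:ℕ) : ℚ) / 2⌉ = (b:ℤ) := by
    have : ((2*b:ℕ):ℚ)/2 = ((b:ℤ):ℚ) := by push_cast; ring
    rw [this, Int.ceil_intCast]
  have h4 : ⌊(((2*b:ℕ):ℚ) - 1) / 2⌋ = (b:ℤ) - 1 := by
    rw [Int.floor_eq_iff] <;> push_cast <;> constructor <;> linarith
  simp only [Mmat, Matrix.of_apply, h1, h2, h3, h4]

lemma Mmat_odd (b : ℕ) (i j r t : Fin 3) :
    Mmat (2*b+1) i j r t = if r = i ∧ t = i then (b:ℤ) else if r = i ∧ t = j then (b:ℤ)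
      else if r = j ∧ t = i then (b:ℤ)+1 else if r = j ∧ t = j then (b:ℤ) else 0 := by
  have h1 : ⌊((2*b+1:ℕ) : ℚ) / 2⌋ = (b:ℤ) := by
    rw [Int.floor_eq_iff] <;> push_cast <;> constructor <;> linarith
  have h2 : ⌈(((2*b+1:ℕ):ℚ) - 1) / 2⌉ = (b:ℤ) := by
    have : (((2*b+1:ℕ):ℚ)-1)/2 = ((b:ℤ):ℚ) := by push_cast; ring
    rw [this, Int.ceil_intCast]
  have h3 : ⌈((2*b+1:ℕ) : ℚ) / 2⌉ = (b:ℤ)+1 := by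
    rw [Int.ceil_eq_iff] <;> push_cast <;> constructor <;> linarith
  have h4 : ⌊(((2*b+1:ℕ):ℚ) - 1) / 2⌋ = (b:ℤ) := by
    have : (((2*b+1:ℕ):ℚ)-1)/2 = ((b:ℤ):ℚ) := by push_cast; ring
    rw [this, Int.floor_intCast]
  simp only [Mmat, Matrix.of_apply, h1, h2, h3, h4]

lemma mu_even (b : ℕ) : mu (2*b) = 0 := by simp [mu, Nat.odd_iff]
lemma mu_odd (b : ℕ) : mu (2*b+1) = 1 := by simp [mu, Nat.odd_iff]

set_option maxHeartbeats 1000000 in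
lemma keyE (b : ℕ) (i j k : Fin 3) (hij : i ≠ j) (hik : i ≠ k) (hjk : j ≠ k)
    (dd : Matrix (Fin 3) (Fin 3) ℤ) (t : Fin 3) :
    dd 0 t + dd 1 t + dd 2 t =
      (((2 * Mmat (2*b) i j * dd + dd + Mmat (2*b) i j : Matrix (Fin 3) (Fin 3) ℤ)) i t
        - ((2 * Mmat (2*b) i j * dd + dd + Mmat (2*b) i j : Matrix (Fin 3) (Fin 3) ℤ)) j t)
      + ((2 * Mmat (2*b) i j * dd + dd + Mmat (2*b) i j : Matrix (Fin 3) (Fin 3) ℤ)) k t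
      - (kd j t : ℤ) := by
  rw [two_mul (Mmat (2*b) i j)]
  simp only [add_mul, Matrix.add_apply, Matrix.mul_apply, Fin.sum_univ_three, kd, Mmat_even]
  fin_cases i <;> fin_cases j <;> fin_cases k <;>
    first
    | (exact absurd rfl hij) | (exact absurd rfl hik) | (exact absurd rfl hjk)
    | (fin_cases t <;>
        norm_num [Fin.ext_iff, show ((⟨2, by norm_num⟩ : Fin 3)) = 2 from rfl] <;> ring)

set_option maxHeartbeats 1000000 in
lemma keyO (b : ℕ) (i j k : Fin 3) (hij : i ≠ j) (hik : i ≠ k) (hjk : j ≠ k)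
    (dd : Matrix (Fin 3) (Fin 3) ℤ) (t : Fin 3) :
    dd 0 t + dd 1 t + dd 2 t =
      -(((2 * Mmat (2*b+1) i j * dd + dd + Mmat (2*b+1) i j : Matrix (Fin 3) (Fin 3) ℤ)) i t
        - ((2 * Mmat (2*b+1) i j * dd + dd + Mmat (2*b+1) i j : Matrix (Fin 3) (Fin 3) ℤ)) j t)
      + ((2 * Mmat (2*b+1) i j * dd + dd + Mmat (2*b+1) i j : Matrix (Fin 3) (Fin 3) ℤ)) k t
      - (kd i t : ℤ) := by
  rw [two_mul (Mmat (2*b+1) i j)]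
  simp only [add_mul, Matrix.add_apply, Matrix.mul_apply, Fin.sum_univ_three, kd, Mmat_odd]
  fin_cases i <;> fin_cases j <;> fin_cases k <;>
    first
    | (exact absurd rfl hij) | (exact absurd rfl hik) | (exact absurd rfl hjk)
    | (fin_cases t <;>
        norm_num [Fin.ext_iff, show ((⟨2, by norm_num⟩ : Fin 3)) = 2 from rfl] <;> ring)

lemma key (aa : ℕ) (i j k : Fin 3) (hij : i ≠ j) (hik : i ≠ k) (hjk : j ≠ k)
    (dd : Matrix (Fin 3) (Fin 3) ℤ) (t : Fin 3) :
    dd 0 t + dd 1 t + dd 2 t =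
      (-1:ℤ)^(mu aa) *
        (((2 * Mmat aa i j * dd + dd + Mmat aa i j : Matrix (Fin 3) (Fin 3) ℤ)) i t
        - ((2 * Mmat aa i j * dd + dd + Mmat aa i j : Matrix (Fin 3) (Fin 3) ℤ)) j t)
      + ((2 * Mmat aa i j * dd + dd + Mmat aa i j : Matrix (Fin 3) (Fin 3) ℤ)) k t
      - (mu aa : ℤ) * (kd i t : ℤ) + ((mu aa : ℤ) - 1) * (kd j t : ℤ) := by
  rcases Nat.even_or_odd aa with ⟨b, hb⟩ | ⟨b, hb⟩
  · rw [show aa = 2*b by omega]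
    simp only [mu_even, pow_zero, one_mul, Nat.cast_zero, zero_mul, sub_zero, zero_sub,
      neg_one_mul, neg_mul]
    have := keyE b i j k hij hik hjk dd t
    linarith
  · rw [show aa = 2*b+1 by omega]
    simp only [mu_odd, pow_one, Nat.cast_one, one_mul, sub_self, zero_mul, add_zero,
      neg_one_mul]
    have := keyO b i j k hij hik hjk dd t
    linarith

theorem sum_from_next_step
    (m : ℕ) (hm : 1 ≤ m) (a : ℕ → ℕ)
    (ha : ∀ n, 1 ≤ n → n ≤ m → 0 < a n)
    (σ : ℕ → Equiv.Perm (Fin 3))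
    (hσ1 : σ 1 = 1)
    (hσ : ∀ n, 1 ≤ n → n ≤ m →
      σ (n + 1) = if Even (a n) then σ n * trans13 else σ n * cyc132)
    (D : ℕ → Matrix (Fin 3) (Fin 3) ℤ)
    (hD0 : D 0 = 0)
    (hD : ∀ n, n + 1 ≤ m →
      D (n + 1) = 2 * Mmat (a (n + 1)) (σ (n + 1) 0) (σ (n + 1) 1) * D n + D n
        + Mmat (a (n + 1)) (σ (n + 1) 0) (σ (n + 1) 1))
    (s : ℕ → Fin 3 → ℤ)
    (hs : ∀ n t, s n t = D n 0 t + D n 1 t + D n 2 t)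
 :
    ∀ n, n + 1 ≤ m → ∀ t : Fin 3,
      s n t = (-1 : ℤ) ^ (mu (a (n + 1))) *
          (D (n + 1) (σ (n + 1) 0) t - D (n + 1) (σ (n + 1) 1) t)
        + D (n + 1) (σ (n + 1) 2) t
        - (mu (a (n + 1)) : ℤ) * (kd (σ (n + 1) 0) t : ℤ)
        + ((mu (a (n + 1)) : ℤ) - 1) * (kd (σ (n + 1) 1) t : ℤ) := by
  intro n hn t
  rw [hs, hD n hn]
  exact key (a (n+1)) _ _ _ ((σ (n+1)).injective.ne (by decide))
    ((σ (n+1)).injective.ne (by decide)) ((σ (n+1)).injective.ne (by decide)) (D n) t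
end

section
/- For every 0 ≤ n ≤ m and every t ∈ {1,2,3}, writing i = i_{n+1}, j = j_{n+1}, k = k_{n+1}, and d_{rt} = d_{rt}(n), one has d_{kt} = d_{it} + d_{jt} − δ_{kt} + δ_{3t} + (−1)^{δ_{3t}}·μ_n. -/
lemma kd_self (r : Fin 3) : kd r r = 1 := if_pos rfl
lemma kd_ne {r t : Fin 3} (h : r ≠ t) : kd r t = 0 := if_neg h
lemma kd_pow (r t : Fin 3) : 2 * (kd r t : ℤ) + (-1) ^ (kd r t) = 1 := by
  unfold kd; split <;> norm_num

lemma mu_succ (n : ℕ) : (mu (n + 1) : ℤ) = 1 - mu n := by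
  rcases Nat.even_or_odd n with h | h
  · simp [mu, Nat.odd_add_one, h, Nat.not_odd_iff_even.mpr h]
  · simp [mu, Nat.odd_add_one, h, Nat.not_even_iff_odd.mpr h]

lemma perm_cases (P : Equiv.Perm (Fin 3)) (t : Fin 3) : t = P 0 ∨ t = P 1 ∨ t = P 2 := by
  obtain ⟨x, hx⟩ := P.surjective t
  fin_cases x
  · exact Or.inl hx.symm
  · exact Or.inr (Or.inl hx.symm)
  · exact Or.inr (Or.inr hx.symm)

lemma Mmat_ii (a : ℕ) {i j : Fin 3} (_hij : i ≠ j) : Mmat a i j i i = ⌊(a : ℚ) / 2⌋ := by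
  simp [Mmat]
lemma Mmat_ij (a : ℕ) {i j : Fin 3} (hij : i ≠ j) : Mmat a i j i j = ⌈((a : ℚ) - 1) / 2⌉ := by
  simp [Mmat, hij, hij.symm]
lemma Mmat_ji (a : ℕ) {i j : Fin 3} (hij : i ≠ j) : Mmat a i j j i = ⌈(a : ℚ) / 2⌉ := by
  simp [Mmat, hij, hij.symm]
lemma Mmat_jj (a : ℕ) {i j : Fin 3} (hij : i ≠ j) : Mmat a i j j j = ⌊((a : ℚ) - 1) / 2⌋ := by
  simp [Mmat, hij, hij.symm]
lemma Mmat_k_row (a : ℕ) {i j k : Fin 3} (hki : k ≠ i) (hkj : k ≠ j) (x : Fin 3) :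
    Mmat a i j k x = 0 := by
  simp [Mmat, hki, hkj]
lemma Mmat_k_col (a : ℕ) {i j k : Fin 3} (hki : k ≠ i) (hkj : k ≠ j) (x : Fin 3) :
    Mmat a i j x k = 0 := by
  simp [Mmat, hki, hkj]

lemma ceil_floor_even {a : ℕ} (h : Even a) :
    ⌈(a : ℚ) / 2⌉ = ⌊(a : ℚ) / 2⌋ ∧ ⌈((a : ℚ) - 1) / 2⌉ = ⌊((a : ℚ) - 1) / 2⌋ + 1 := by
  obtain ⟨b, rfl⟩ := h
  constructor
  · rw [show ((b + b : ℕ) : ℚ) / 2 = ((b : ℤ) : ℚ) by push_cast; ring,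
      Int.ceil_intCast, Int.floor_intCast]
  · have h1 : ⌈(((b + b : ℕ) : ℚ) - 1) / 2⌉ = (b : ℤ) := by
      rw [Int.ceil_eq_iff] <;> push_cast <;> constructor <;> linarith
    have h2 : ⌊(((b + b : ℕ) : ℚ) - 1) / 2⌋ = (b : ℤ) - 1 := by
      rw [Int.floor_eq_iff] <;> push_cast <;> constructor <;> linarith
    rw [h1, h2]; ring

lemma ceil_floor_odd {a : ℕ} (h : Odd a) :
    ⌈(a : ℚ) / 2⌉ = ⌊(a : ℚ) / 2⌋ + 1 ∧ ⌈((a : ℚ) - 1) / 2⌉ = ⌊((a : ℚ) - 1) / 2⌋ := by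
  obtain ⟨b, rfl⟩ := h
  constructor
  · have h1 : ⌈((2 * b + 1 : ℕ) : ℚ) / 2⌉ = (b : ℤ) + 1 := by
      rw [Int.ceil_eq_iff] <;> push_cast <;> constructor <;> linarith
    have h2 : ⌊((2 * b + 1 : ℕ) : ℚ) / 2⌋ = (b : ℤ) := by
      rw [Int.floor_eq_iff] <;> push_cast <;> constructor <;> linarith
    rw [h1, h2]
  · rw [show (((2 * b + 1 : ℕ) : ℚ) - 1) / 2 = ((b : ℤ) : ℚ) by push_cast; ring,
      Int.ceil_intCast, Int.floor_intCast]

section Step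

variable (A : ℕ) (P : Equiv.Perm (Fin 3)) (Dn Dn1 : Matrix (Fin 3) (Fin 3) ℤ) (t : Fin 3) (w : ℤ)

lemma step_even (hA : Even A)
    (hkey : Dn1 = 2 * Mmat A (P 0) (P 1) * Dn + Dn + Mmat A (P 0) (P 1))
    (IH : Dn (P 2) t = Dn (P 0) t + Dn (P 1) t - (kd (P 2) t : ℤ) + (kd 2 t : ℤ)
      + (-1 : ℤ) ^ (kd 2 t) * w) :
    Dn1 (P 0) t = Dn1 (P 2) t + Dn1 (P 1) t - (kd (P 0) t : ℤ) + (kd 2 t : ℤ)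
      + (-1 : ℤ) ^ (kd 2 t) * (1 - w) := by
  set i := P 0 with hi
  set j := P 1 with hj
  set k := P 2 with hk
  have hij : i ≠ j := fun h => absurd (P.injective h) (by decide)
  have hik : i ≠ k := fun h => absurd (P.injective h) (by decide)
  have hjk : j ≠ k := fun h => absurd (P.injective h) (by decide)
  obtain ⟨hc1, hc2⟩ := ceil_floor_even hA
  have hkey' : Dn1 = Mmat A i j * Dn + (Mmat A i j * Dn + Dn) + Mmat A i j := by
    rw [hkey, two_mul, add_mul]; abel
  have sum3 : ∀ r, (Mmat A i j * Dn) r t =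
      Mmat A i j r i * Dn i t + Mmat A i j r j * Dn j t + Mmat A i j r k * Dn k t := by
    intro r
    rw [Matrix.mul_apply, ← Equiv.sum_comp P (fun x => Mmat A i j r x * Dn x t),
      Fin.sum_univ_three, ← hi, ← hj, ← hk]
  have rowi : Dn1 i t = Mmat A i j i i * Dn i t + Mmat A i j i j * Dn j t
      + (Mmat A i j i i * Dn i t + Mmat A i j i j * Dn j t) + Dn i t + Mmat A i j i t := by
    rw [hkey']
    simp only [Matrix.add_apply, sum3 i, Mmat_k_col A (Ne.symm hik) (Ne.symm hjk)]
    ring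
  have rowj : Dn1 j t = Mmat A i j j i * Dn i t + Mmat A i j j j * Dn j t
      + (Mmat A i j j i * Dn i t + Mmat A i j j j * Dn j t) + Dn j t + Mmat A i j j t := by
    rw [hkey']
    simp only [Matrix.add_apply, sum3 j, Mmat_k_col A (Ne.symm hik) (Ne.symm hjk)]
    ring
  have rowk : Dn1 k t = Dn k t := by
    rw [hkey']
    simp only [Matrix.add_apply, sum3 k, Mmat_k_row A (Ne.symm hik) (Ne.symm hjk)]
    ring
  rw [rowi, rowj, rowk]
  rw [Mmat_ii A hij, Mmat_ij A hij, Mmat_ji A hij, Mmat_jj A hij, hc1, hc2]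
  have hkp := kd_pow 2 t
  rcases perm_cases P t with h | h | h
  · rw [← hi] at h; subst h
    simp only [kd_self, kd_ne (Ne.symm hij), kd_ne (Ne.symm hik), Mmat_ii A hij,
      Mmat_ji A hij, hc1, Nat.cast_one, Nat.cast_zero] at IH ⊢
    nlinarith [IH, hkp]
  · rw [← hj] at h; subst h
    simp only [kd_self, kd_ne hij, kd_ne (Ne.symm hjk), Mmat_ij A hij,
      Mmat_jj A hij, hc2, Nat.cast_one, Nat.cast_zero] at IH ⊢
    nlinarith [IH, hkp]
  · rw [← hk] at h; subst h
    simp only [kd_self, kd_ne hik, kd_ne hjk,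
      Mmat_k_col A (Ne.symm hik) (Ne.symm hjk), Nat.cast_one, Nat.cast_zero] at IH ⊢
    nlinarith [IH, hkp]

lemma step_odd (hA : Odd A)
    (hkey : Dn1 = 2 * Mmat A (P 0) (P 1) * Dn + Dn + Mmat A (P 0) (P 1))
    (IH : Dn (P 2) t = Dn (P 0) t + Dn (P 1) t - (kd (P 2) t : ℤ) + (kd 2 t : ℤ)
      + (-1 : ℤ) ^ (kd 2 t) * w) :
    Dn1 (P 1) t = Dn1 (P 2) t + Dn1 (P 0) t - (kd (P 1) t : ℤ) + (kd 2 t : ℤ)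
      + (-1 : ℤ) ^ (kd 2 t) * (1 - w) := by
  set i := P 0 with hi
  set j := P 1 with hj
  set k := P 2 with hk
  have hij : i ≠ j := fun h => absurd (P.injective h) (by decide)
  have hik : i ≠ k := fun h => absurd (P.injective h) (by decide)
  have hjk : j ≠ k := fun h => absurd (P.injective h) (by decide)
  obtain ⟨hc1, hc2⟩ := ceil_floor_odd hA
  have hkey' : Dn1 = Mmat A i j * Dn + (Mmat A i j * Dn + Dn) + Mmat A i j := by
    rw [hkey, two_mul, add_mul]; abel
  have sum3 : ∀ r, (Mmat A i j * Dn) r t =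
      Mmat A i j r i * Dn i t + Mmat A i j r j * Dn j t + Mmat A i j r k * Dn k t := by
    intro r
    rw [Matrix.mul_apply, ← Equiv.sum_comp P (fun x => Mmat A i j r x * Dn x t),
      Fin.sum_univ_three, ← hi, ← hj, ← hk]
  have rowi : Dn1 i t = Mmat A i j i i * Dn i t + Mmat A i j i j * Dn j t
      + (Mmat A i j i i * Dn i t + Mmat A i j i j * Dn j t) + Dn i t + Mmat A i j i t := by
    rw [hkey']
    simp only [Matrix.add_apply, sum3 i, Mmat_k_col A (Ne.symm hik) (Ne.symm hjk)]
    ring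
  have rowj : Dn1 j t = Mmat A i j j i * Dn i t + Mmat A i j j j * Dn j t
      + (Mmat A i j j i * Dn i t + Mmat A i j j j * Dn j t) + Dn j t + Mmat A i j j t := by
    rw [hkey']
    simp only [Matrix.add_apply, sum3 j, Mmat_k_col A (Ne.symm hik) (Ne.symm hjk)]
    ring
  have rowk : Dn1 k t = Dn k t := by
    rw [hkey']
    simp only [Matrix.add_apply, sum3 k, Mmat_k_row A (Ne.symm hik) (Ne.symm hjk)]
    ring
  rw [rowi, rowj, rowk]
  rw [Mmat_ii A hij, Mmat_ij A hij, Mmat_ji A hij, Mmat_jj A hij, hc1, hc2]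
  have hkp := kd_pow 2 t
  rcases perm_cases P t with h | h | h
  · rw [← hi] at h; subst h
    simp only [kd_self, kd_ne (Ne.symm hij), kd_ne (Ne.symm hik), Mmat_ii A hij,
      Mmat_ji A hij, hc1, Nat.cast_one, Nat.cast_zero] at IH ⊢
    nlinarith [IH, hkp]
  · rw [← hj] at h; subst h
    simp only [kd_self, kd_ne hij, kd_ne (Ne.symm hjk), Mmat_ij A hij,
      Mmat_jj A hij, hc2, Nat.cast_one, Nat.cast_zero] at IH ⊢
    nlinarith [IH, hkp]
  · rw [← hk] at h; subst h
    simp only [kd_self, kd_ne hik, kd_ne hjk,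
      Mmat_k_col A (Ne.symm hik) (Ne.symm hjk), Nat.cast_one, Nat.cast_zero] at IH ⊢
    nlinarith [IH, hkp]

end Step

theorem idle_row_formula
    (m : ℕ) (hm : 1 ≤ m) (a : ℕ → ℕ)
    (ha : ∀ n, 1 ≤ n → n ≤ m → 0 < a n)
    (σ : ℕ → Equiv.Perm (Fin 3))
    (hσ1 : σ 1 = 1)
    (hσ : ∀ n, 1 ≤ n → n ≤ m →
      σ (n + 1) = if Even (a n) then σ n * trans13 else σ n * cyc132)
    (D : ℕ → Matrix (Fin 3) (Fin 3) ℤ)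
    (hD0 : D 0 = 0)
    (hD : ∀ n, n + 1 ≤ m →
      D (n + 1) = 2 * Mmat (a (n + 1)) (σ (n + 1) 0) (σ (n + 1) 1) * D n + D n
        + Mmat (a (n + 1)) (σ (n + 1) 0) (σ (n + 1) 1))
    (s : ℕ → Fin 3 → ℤ)
    (hs : ∀ n t, s n t = D n 0 t + D n 1 t + D n 2 t)
 :
    ∀ n ≤ m, ∀ t : Fin 3,
      D n (σ (n + 1) 2) t = D n (σ (n + 1) 0) t + D n (σ (n + 1) 1) t
        - (kd (σ (n + 1) 2) t : ℤ) + (kd 2 t : ℤ)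
        + (-1 : ℤ) ^ (kd 2 t) * (mu n : ℤ) := by
  intro n
  induction n with
  | zero =>
    intro _ t
    simp [hD0, hσ1, mu]
  | succ n ih =>
    intro hn1 t
    have hnm : n ≤ m := Nat.le_of_succ_le hn1
    have IH := ih hnm t
    have hσ2 : σ (n + 1 + 1) =
        if Even (a (n + 1)) then σ (n + 1) * trans13 else σ (n + 1) * cyc132 :=
      hσ (n + 1) (Nat.le_add_left 1 n) hn1
    rcases Nat.even_or_odd (a (n + 1)) with he | ho
    · rw [if_pos he] at hσ2
      have e0 : σ (n + 1 + 1) 0 = σ (n + 1) 2 := by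
        rw [hσ2, Equiv.Perm.mul_apply, show trans13 0 = 2 from by decide]
      have e1 : σ (n + 1 + 1) 1 = σ (n + 1) 1 := by
        rw [hσ2, Equiv.Perm.mul_apply, show trans13 1 = 1 from by decide]
      have e2 : σ (n + 1 + 1) 2 = σ (n + 1) 0 := by
        rw [hσ2, Equiv.Perm.mul_apply, show trans13 2 = 0 from by decide]
      rw [e0, e1, e2, mu_succ]
      exact step_even (a (n + 1)) (σ (n + 1)) (D n) (D (n + 1)) t (mu n) he (hD n hn1) IH
    · rw [if_neg (Nat.not_even_iff_odd.mpr ho)] at hσ2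
      have e0 : σ (n + 1 + 1) 0 = σ (n + 1) 2 := by
        rw [hσ2, Equiv.Perm.mul_apply, show cyc132 0 = 2 from by decide]
      have e1 : σ (n + 1 + 1) 1 = σ (n + 1) 0 := by
        rw [hσ2, Equiv.Perm.mul_apply, show cyc132 1 = 0 from by decide]
      have e2 : σ (n + 1 + 1) 2 = σ (n + 1) 1 := by
        rw [hσ2, Equiv.Perm.mul_apply, show cyc132 2 = 1 from by decide]
      rw [e0, e1, e2, mu_succ]
      exact step_odd (a (n + 1)) (σ (n + 1)) (D n) (D (n + 1)) t (mu n) ho (hD n hn1) IH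
end
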